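/- (Invariance of the field commutator under a change of coordinates.) Let x : ℝ → I be a C¹ strictly increasing bijection onto an open interval I ⊆ ℝ with x'(y) > 0 for all y, and let f₁, f₂ : ℝ → ℂ be integrable with f̂₁(0) = f̂₂(0) = 0. Assume that the maps k ↦ |f̌₁^(k) f̌₂^(k)|/|k| and p ↦ |f̂₁(p) f̂₂(p)|/|p| are Lebesgue integrable on ℝ. Then ∫_ℝ (dk/(2k)) conj(f̌₂^(k)) f̌₁^(k) = ∫_ℝ (dp/(2p)) conj(f̂₂(p)) f̂₁(p). -/

import Mathlib

open MeasureTheory Filter intervalIntegral Topology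

/-- Fourier transform convention: `ft g k = (1/√(2π)) ∫ g t e^{-ikt} dt`. -/
noncomputable def ft (g : ℝ → ℂ) (k : ℝ) : ℂ :=
  (1 / Real.sqrt (2 * Real.pi)) * ∫ t : ℝ, g t * Complex.exp (-(Complex.I * k * t))


noncomputable def sif (b : ℝ) : ℝ := ∫ t in (0:ℝ)..b, Real.sin t / t

lemma w_meas : Measurable fun t : ℝ => Real.sin t / t :=
  Real.measurable_sin.div measurable_id

lemma w_bound (t : ℝ) : |Real.sin t / t| ≤ 1 := by
  rcases eq_or_ne t 0 with h | h
  · simp [h]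
  · rw [abs_div, div_le_one (abs_pos.2 h)]; exact Real.abs_sin_le_abs

lemma w_intInt (a b : ℝ) : IntervalIntegrable (fun t => Real.sin t / t) volume a b := by
  rw [intervalIntegrable_iff]
  refine Integrable.mono' (g := fun _ => (1:ℝ)) ?_ w_meas.aestronglyMeasurable.restrict ?_
  · exact integrableOn_const measure_Ioc_lt_top.ne
  · exact Eventually.of_forall fun t => by simpa [Real.norm_eq_abs, abs_div] using w_bound t

lemma sif_abs_le (b : ℝ) : |sif b| ≤ |b| := by
  have := intervalIntegral.norm_integral_le_of_norm_le_const
    (f := fun t : ℝ => Real.sin t / t) (C := 1) (a := 0) (b := b)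
    (fun x _ => by simpa [Real.norm_eq_abs, abs_div] using w_bound x)
  simpa [sif, Real.norm_eq_abs] using this

lemma sif_parts {b : ℝ} (hb : 1 ≤ b) :
    (∫ t in (1:ℝ)..b, Real.sin t / t)
      = Real.cos 1 - Real.cos b / b - ∫ t in (1:ℝ)..b, Real.cos t / t ^ 2 := by
  have hpos : ∀ x ∈ Set.uIcc (1:ℝ) b, (0:ℝ) < x := by
    intro x hx
    rcases Set.mem_uIcc.1 hx with ⟨h1, _⟩ | ⟨h1, _⟩
    · linarith
    · linarith
  have h := intervalIntegral.integral_mul_deriv_eq_deriv_mul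
      (u := fun t : ℝ => t⁻¹) (u' := fun t : ℝ => -(t ^ 2)⁻¹)
      (v := fun t : ℝ => -Real.cos t) (v' := fun t : ℝ => Real.sin t)
      (a := 1) (b := b)
      (fun x hx => by
        have := hasDerivAt_inv (ne_of_gt (hpos x hx))
        simpa using this)
      (fun x _ => by have := (Real.hasDerivAt_cos x).neg; simp only [neg_neg] at this; exact this)
      ?_ ?_
  · have e1 : ∀ t : ℝ, t⁻¹ * Real.sin t = Real.sin t / t := fun t => by
      rw [inv_mul_eq_div]
    have e2 : (∫ t in (1:ℝ)..b, t⁻¹ * Real.sin t) = ∫ t in (1:ℝ)..b, Real.sin t / t := by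
      simp only [e1]
    rw [e2] at h
    rw [h]
    have e3 : (∫ x in (1:ℝ)..b, -(x ^ 2)⁻¹ * -Real.cos x)
        = ∫ x in (1:ℝ)..b, Real.cos x / x ^ 2 := by
      congr 1; funext x; rw [neg_mul_neg, inv_mul_eq_div]
    rw [e3]
    ring
  · apply ContinuousOn.intervalIntegrable
    exact (continuousOn_inv₀.comp (continuousOn_pow 2)
      (fun x hx => ne_of_gt (pow_pos (hpos x hx) 2))).neg
  · exact Real.continuous_sin.continuousOn.intervalIntegrable

lemma inv_sq_intInt {b : ℝ} (hb : 1 ≤ b) :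
    IntervalIntegrable (fun t : ℝ => (t ^ 2)⁻¹) volume 1 b := by
  apply ContinuousOn.intervalIntegrable
  refine continuousOn_inv₀.comp (continuousOn_pow 2) fun t ht => ?_
  rcases Set.mem_uIcc.1 ht with ⟨h1, _⟩ | ⟨h1, _⟩ <;>
    · have h0 : (0:ℝ) < t := by linarith
      exact ne_of_gt (pow_pos h0 2)

lemma inv_sq_integral {b : ℝ} (hb : 1 ≤ b) :
    (∫ t in (1:ℝ)..b, (t ^ 2)⁻¹) = 1 - b⁻¹ := by
  have h : ∀ t ∈ Set.uIcc (1:ℝ) b, HasDerivAt (fun t : ℝ => -t⁻¹) ((t ^ 2)⁻¹) t := by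
    intro t ht
    rcases Set.mem_uIcc.1 ht with ⟨h1, _⟩ | ⟨h1, _⟩ <;>
      · have ht0 : t ≠ 0 := by intro h0; rw [h0] at h1; linarith
        have := (hasDerivAt_inv ht0).neg; simp only [neg_neg] at this; exact this
  rw [intervalIntegral.integral_eq_sub_of_hasDerivAt h (inv_sq_intInt hb)]
  ring

lemma cos_tail_bound {b : ℝ} (hb : 1 ≤ b) :
    |∫ t in (1:ℝ)..b, Real.cos t / t ^ 2| ≤ 1 := by
  have hae : ∀ᵐ t ∂(volume.restrict (Set.uIoc (1:ℝ) b)),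
      ‖Real.cos t / t ^ 2‖ ≤ (t ^ 2)⁻¹ := by
    refine Filter.eventually_of_mem (self_mem_ae_restrict measurableSet_uIoc) fun t ht => ?_
    rw [Set.uIoc_of_le hb] at ht
    have ht0 : (0:ℝ) < t := lt_trans one_pos ht.1
    rw [Real.norm_eq_abs, abs_div, abs_of_pos (by positivity : (0:ℝ) < t ^ 2),
      div_le_iff₀ (by positivity : (0:ℝ) < t ^ 2), inv_mul_cancel₀ (by positivity : (t:ℝ) ^ 2 ≠ 0)]
    exact Real.abs_cos_le_one t
  have h := intervalIntegral.norm_integral_le_abs_of_norm_le hae (inv_sq_intInt hb)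
  rw [inv_sq_integral hb] at h
  have hb0 : (0:ℝ) < b := lt_of_lt_of_le one_pos hb
  have h1 : b⁻¹ ≤ 1 := by
    rw [inv_le_one_iff₀]; right; exact hb
  have h2 : (0:ℝ) ≤ b⁻¹ := by positivity
  calc |∫ t in (1:ℝ)..b, Real.cos t / t ^ 2| ≤ |1 - b⁻¹| := by
        simpa [Real.norm_eq_abs] using h
    _ ≤ 1 := by rw [abs_of_nonneg (by linarith)]; linarith

lemma sif_bound {b : ℝ} (hb : 0 ≤ b) : |sif b| ≤ 4 := by
  rcases le_or_gt b 1 with h | h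
  · have := sif_abs_le b
    rw [abs_of_nonneg hb] at this
    linarith
  · have hsplit : sif b = sif 1 + ∫ t in (1:ℝ)..b, Real.sin t / t := by
      rw [sif, sif, ← intervalIntegral.integral_add_adjacent_intervals (w_intInt 0 1) (w_intInt 1 b)]
    rw [hsplit, sif_parts h.le]
    have h1 : |sif 1| ≤ 1 := by simpa using sif_abs_le 1
    have h2 : |Real.cos 1| ≤ 1 := Real.abs_cos_le_one 1
    have h3 : |Real.cos b / b| ≤ 1 := by
      rw [abs_div, abs_of_pos (by linarith : (0:ℝ) < b), div_le_one (by linarith)]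
      calc |Real.cos b| ≤ 1 := Real.abs_cos_le_one b
        _ ≤ b := by linarith
    have h4 := cos_tail_bound h.le
    rw [abs_le] at h1 h2 h3 h4 ⊢
    constructor <;> linarith [h1.1, h1.2]

lemma cos_div_sq_integrableOn :
    IntegrableOn (fun t : ℝ => Real.cos t / t ^ 2) (Set.Ioi 1) volume := by
  refine Integrable.mono' (g := fun t : ℝ => t ^ (-2 : ℝ))
    (integrableOn_Ioi_rpow_of_lt (by norm_num) one_pos)
    ((Real.measurable_cos.div ((measurable_id.pow_const 2))).aestronglyMeasurable.restrict) ?_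
  refine (ae_restrict_iff' measurableSet_Ioi).2 (Filter.Eventually.of_forall fun t ht => ?_)
  have ht0 : (0:ℝ) < t := lt_trans one_pos ht
  show ‖Real.cos t / t ^ 2‖ ≤ t ^ (-2:ℝ)
  rw [Real.norm_eq_abs, abs_div, abs_of_pos (by positivity : (0:ℝ) < t ^ 2),
    Real.rpow_neg ht0.le, show ((2:ℝ)) = ((2:ℕ):ℝ) by norm_num, Real.rpow_natCast,
    div_le_iff₀ (by positivity : (0:ℝ) < t ^ 2), inv_mul_cancel₀ (by positivity : (t:ℝ) ^ 2 ≠ 0)]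
  exact Real.abs_cos_le_one t

lemma sif_exists : ∃ S : ℝ, Tendsto sif atTop (𝓝 S) := by
  refine ⟨sif 1 + (Real.cos 1 - 0 - ∫ t in Set.Ioi (1:ℝ), Real.cos t / t ^ 2), ?_⟩
  have hev : (fun b : ℝ => sif 1 + (Real.cos 1 - Real.cos b / b - ∫ t in (1:ℝ)..b, Real.cos t / t ^ 2))
      =ᶠ[atTop] sif := by
    filter_upwards [eventually_ge_atTop (1:ℝ)] with b hb
    rw [← sif_parts hb, sif, sif,
      intervalIntegral.integral_add_adjacent_intervals (w_intInt 0 1) (w_intInt 1 b)]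
  refine Tendsto.congr' hev ?_
  have t1 : Tendsto (fun b : ℝ => Real.cos b / b) atTop (𝓝 0) := by
    apply squeeze_zero_norm' ?_ tendsto_inv_atTop_zero
    filter_upwards [eventually_ge_atTop (1:ℝ)] with b hb
    have hb0 : (0:ℝ) < b := lt_of_lt_of_le one_pos hb
    rw [Real.norm_eq_abs, abs_div, abs_of_pos hb0, div_le_iff₀ hb0,
      inv_mul_cancel₀ (ne_of_gt hb0)]
    exact Real.abs_cos_le_one b
  have t2 : Tendsto (fun b : ℝ => ∫ t in (1:ℝ)..b, Real.cos t / t ^ 2) atTop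
      (𝓝 (∫ t in Set.Ioi (1:ℝ), Real.cos t / t ^ 2)) :=
    intervalIntegral_tendsto_integral_Ioi 1 cos_div_sq_integrableOn tendsto_id
  exact tendsto_const_nhds.add (((tendsto_const_nhds).sub t1).sub t2)

noncomputable def J (n : ℕ) (Δ : ℝ) : ℝ :=
  ∫ k in (1/((n:ℝ)+1))..((n:ℝ)+1), Real.sin (k * Δ) / k

lemma Ja_pos (n : ℕ) : 0 < 1/((n:ℝ)+1) := by positivity

lemma Jab (n : ℕ) : 1/((n:ℝ)+1) ≤ (n:ℝ)+1 := by
  rw [div_le_iff₀ (by positivity)]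
  nlinarith [Nat.cast_nonneg (α := ℝ) n]

lemma J_eq {Δ : ℝ} (hΔ : 0 < Δ) (n : ℕ) :
    J n Δ = sif (((n:ℝ)+1) * Δ) - sif (1/((n:ℝ)+1) * Δ) := by
  have h1 : ∀ k : ℝ, Real.sin (k * Δ) / k = Δ * ((fun t => Real.sin t / t) (k * Δ)) := by
    intro k
    rcases eq_or_ne k 0 with rfl | hk
    · simp
    · field_simp
  rw [J]
  simp_rw [h1]
  rw [intervalIntegral.integral_const_mul,
    intervalIntegral.integral_comp_mul_right (fun t => Real.sin t / t) (ne_of_gt hΔ),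
    smul_eq_mul, ← mul_assoc, mul_inv_cancel₀ (ne_of_gt hΔ), one_mul]
  exact (intervalIntegral.integral_interval_sub_left (w_intInt 0 _) (w_intInt 0 _)).symm

lemma J_zero (n : ℕ) : J n 0 = 0 := by simp [J]

lemma J_neg (n : ℕ) (Δ : ℝ) : J n (-Δ) = -J n Δ := by
  rw [J, J, ← intervalIntegral.integral_neg]
  congr 1
  funext k
  rw [mul_neg, Real.sin_neg, neg_div]

lemma J_bound (n : ℕ) (Δ : ℝ) : |J n Δ| ≤ 8 := by
  have key : ∀ Δ' : ℝ, 0 < Δ' → |J n Δ'| ≤ 8 := by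
    intro Δ' hΔ'
    rw [J_eq hΔ']
    have b1 := sif_bound (b := ((n:ℝ)+1) * Δ') (by positivity)
    have b2 := sif_bound (b := 1/((n:ℝ)+1) * Δ') (by positivity)
    rw [abs_le] at b1 b2 ⊢
    constructor <;> linarith
  rcases lt_trichotomy Δ 0 with h | rfl | h
  · have := key (-Δ) (by linarith)
    rw [show Δ = -(-Δ) by ring, J_neg, abs_neg]
    exact this
  · simp [J_zero]
  · exact key Δ h

lemma J_tendsto {S : ℝ} (hS : Tendsto sif atTop (𝓝 S)) (Δ : ℝ) :
    Tendsto (fun n : ℕ => J n Δ) atTop (𝓝 (S * Real.sign Δ)) := by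
  have key : ∀ Δ' : ℝ, 0 < Δ' → Tendsto (fun n : ℕ => J n Δ') atTop (𝓝 S) := by
    intro Δ' hΔ'
    have hb : Tendsto (fun n : ℕ => ((n:ℝ)+1) * Δ') atTop atTop := by
      apply Filter.Tendsto.atTop_mul_const hΔ'
      exact tendsto_atTop_add_const_right _ 1 tendsto_natCast_atTop_atTop
    have t1 : Tendsto (fun n : ℕ => sif (((n:ℝ)+1) * Δ')) atTop (𝓝 S) := hS.comp hb
    have t2 : Tendsto (fun n : ℕ => sif (1/((n:ℝ)+1) * Δ')) atTop (𝓝 0) := by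
      apply squeeze_zero_norm' (a := fun n : ℕ => Δ' * (1/((n:ℝ)+1)))
      · refine Filter.Eventually.of_forall fun n => ?_
        have := sif_abs_le (1/((n:ℝ)+1) * Δ')
        rw [Real.norm_eq_abs]
        calc |sif (1/((n:ℝ)+1) * Δ')| ≤ |1/((n:ℝ)+1) * Δ'| := this
          _ = Δ' * (1/((n:ℝ)+1)) := by
              rw [abs_of_pos (by positivity)]; ring
      · simpa using (tendsto_one_div_add_atTop_nhds_zero_nat).const_mul Δ'
    have := t1.sub t2
    rw [sub_zero] at this
    exact this.congr fun n => (J_eq hΔ' n).symm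
  rcases lt_trichotomy Δ 0 with h | rfl | h
  · have := (key (-Δ) (by linarith)).neg
    rw [Real.sign_of_neg h]
    have heq : (fun n : ℕ => -J n (-Δ)) = fun n : ℕ => J n Δ := by
      funext n; rw [← J_neg, neg_neg]
    rw [heq] at this
    convert this using 1
    ring
  · rw [Real.sign_zero]
    simpa [J_zero] using tendsto_const_nhds (x := (0:ℝ)) (f := (atTop : Filter ℕ))
  · rw [Real.sign_of_pos h]
    simpa using key Δ h

lemma J_cont (n : ℕ) : Continuous (J n) := by
  have hab : 1/((n:ℝ)+1) ≤ (n:ℝ)+1 := Jab n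
  have hrw : J n = fun Δ => ∫ k in Set.Ioc (1/((n:ℝ)+1)) ((n:ℝ)+1), Real.sin (k * Δ) / k := by
    funext Δ
    rw [J, intervalIntegral.integral_of_le hab]
  rw [hrw]
  haveI : IsFiniteMeasure (volume.restrict (Set.Ioc (1/((n:ℝ)+1)) ((n:ℝ)+1))) :=
    ⟨by rw [Measure.restrict_apply_univ]; exact measure_Ioc_lt_top⟩
  apply continuous_of_dominated (bound := fun _ => ((n:ℝ)+1))
  · intro Δ
    exact ((Real.measurable_sin.comp (measurable_id.mul_const Δ)).div
      measurable_id).aestronglyMeasurable.restrict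
  · intro Δ
    refine (ae_restrict_iff' measurableSet_Ioc).2 (Filter.Eventually.of_forall fun k hk => ?_)
    have hk0 : 0 < k := lt_of_lt_of_le (Ja_pos n) hk.1.le
    rw [Real.norm_eq_abs, abs_div, abs_of_pos hk0, div_le_iff₀ hk0]
    calc |Real.sin (k * Δ)| ≤ 1 := abs_le.2 ⟨Real.neg_one_le_sin _, Real.sin_le_one _⟩
      _ ≤ ((n:ℝ)+1) * k := by
          have h1 : 1/((n:ℝ)+1) ≤ k := hk.1.le
          rw [div_le_iff₀ (by positivity)] at h1
          linarith [h1]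
  · exact integrable_const _
  · refine Filter.Eventually.of_forall fun k => ?_
    exact (Real.continuous_sin.comp (continuous_const.mul continuous_id)).div_const k

def sset (n : ℕ) : Set ℝ := {k : ℝ | 1/((n:ℝ)+1) ≤ |k| ∧ |k| ≤ (n:ℝ)+1}

lemma sset_meas (n : ℕ) : MeasurableSet (sset n) :=
  ((measurableSet_le measurable_const measurable_id.abs).inter
    (measurableSet_le measurable_id.abs measurable_const))

lemma sset_mono : Monotone sset := by
  intro m n hmn k hk
  have h1 : 1/((n:ℝ)+1) ≤ 1/((m:ℝ)+1) := by
    apply one_div_le_one_div_of_le (by positivity)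
    exact_mod_cast Nat.add_le_add_right hmn 1
  have h2 : ((m:ℝ)+1) ≤ ((n:ℝ)+1) := by
    exact_mod_cast Nat.add_le_add_right hmn 1
  exact ⟨le_trans h1 hk.1, le_trans hk.2 h2⟩

lemma sset_union : (⋃ n, sset n) = {(0:ℝ)}ᶜ := by
  ext k
  simp only [Set.mem_iUnion, Set.mem_compl_iff, Set.mem_singleton_iff, sset, Set.mem_setOf_eq]
  constructor
  · rintro ⟨n, h1, -⟩ rfl
    simp only [abs_zero] at h1
    have : (0:ℝ) < 1/((n:ℝ)+1) := by positivity
    linarith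
  · intro hk
    have hk0 : 0 < |k| := abs_pos.2 hk
    obtain ⟨n, hn⟩ := exists_nat_ge (max (1/|k|) |k|)
    refine ⟨n, ?_, ?_⟩
    · have h1 : 1/|k| ≤ (n:ℝ) := le_trans (le_max_left _ _) hn
      rw [div_le_iff₀ hk0] at h1
      rw [div_le_iff₀ (by positivity)]
      nlinarith [abs_nonneg k]
    · have := le_trans (le_max_right _ _) hn
      linarith

lemma sset_subset (n : ℕ) : sset n ⊆ Set.Icc (-((n:ℝ)+1)) ((n:ℝ)+1) := by
  intro k hk
  rw [Set.mem_Icc]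
  exact abs_le.1 hk.2

lemma sset_vol_lt_top (n : ℕ) : volume (sset n) < ⊤ :=
  lt_of_le_of_lt (measure_mono (sset_subset n)) measure_Icc_lt_top

lemma sset_eq_union (n : ℕ) :
    sset n = Set.Icc (1/((n:ℝ)+1)) ((n:ℝ)+1) ∪ Set.Icc (-((n:ℝ)+1)) (-(1/((n:ℝ)+1))) := by
  have ha := Ja_pos n
  ext k
  simp only [sset, Set.mem_setOf_eq, Set.mem_union, Set.mem_Icc, le_abs, abs_le]
  constructor
  · rintro ⟨h1 | h1, h2, h3⟩
    · exact Or.inl ⟨h1, h3⟩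
    · exact Or.inr ⟨h2, by linarith⟩
  · rintro (⟨h1, h2⟩ | ⟨h1, h2⟩)
    · exact ⟨Or.inl h1, by constructor <;> linarith⟩
    · exact ⟨Or.inr (by linarith), by constructor <;> linarith⟩

noncomputable def Kker (n : ℕ) (Δ : ℝ) : ℂ :=
  ∫ k in sset n, Complex.exp (Complex.I * k * Δ) / (2 * k)

lemma exp_sub_exp (r : ℝ) :
    Complex.exp (Complex.I * r) - Complex.exp (-(Complex.I * r))
      = 2 * Complex.I * Real.sin r := by
  rw [show (Complex.I * (r:ℂ)) = (r:ℂ) * Complex.I from mul_comm _ _, Complex.exp_mul_I,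
    show (-((r:ℂ) * Complex.I)) = ((-r : ℝ):ℂ) * Complex.I by push_cast; ring,
    Complex.exp_mul_I]
  push_cast
  rw [Complex.cos_neg, Complex.sin_neg]
  ring

lemma Kker_eq (n : ℕ) (Δ : ℝ) : Kker n Δ = Complex.I * ((J n Δ : ℝ) : ℂ) := by
  have ha := Ja_pos n
  have hab := Jab n
  set a := 1/((n:ℝ)+1) with ha_def
  set b := ((n:ℝ)+1) with hb_def
  set f : ℝ → ℂ := fun k => Complex.exp (Complex.I * k * Δ) / (2 * k) with hf_def
  have hcontOn : ∀ s : Set ℝ, (∀ k ∈ s, k ≠ 0) → ContinuousOn f s := by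
    intro s hs
    apply ContinuousOn.div
    · exact (Complex.continuous_exp.comp
        (((continuous_const.mul Complex.continuous_ofReal).mul continuous_const))).continuousOn
    · exact (continuous_const.mul Complex.continuous_ofReal).continuousOn
    · intro k hk
      simp only [mul_ne_zero_iff]
      exact ⟨two_ne_zero, Complex.ofReal_ne_zero.2 (hs k hk)⟩
  have hcontOn2 : ContinuousOn (fun k : ℝ => f (-k)) (Set.uIcc a b) := by
    apply (hcontOn {k : ℝ | k ≠ 0} (fun k hk => hk)).comp continuous_neg.continuousOn
    intro k hk
    rw [Set.uIcc_of_le hab] at hk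
    simp only [Set.mem_setOf_eq, neg_ne_zero]
    exact ne_of_gt (lt_of_lt_of_le ha hk.1)
  have huIcc : ∀ k ∈ Set.uIcc a b, k ≠ 0 := by
    intro k hk
    rw [Set.uIcc_of_le hab] at hk
    exact ne_of_gt (lt_of_lt_of_le ha hk.1)
  have hdisj : Disjoint (Set.Icc a b) (Set.Icc (-b) (-a)) := by
    rw [Set.disjoint_left]
    intro k hk1 hk2
    rw [Set.mem_Icc] at hk1 hk2
    linarith [hk1.1, hk2.2]
  have hi1 : IntegrableOn f (Set.Icc a b) volume :=
    ContinuousOn.integrableOn_Icc (hcontOn _ fun k hk => ne_of_gt (lt_of_lt_of_le ha hk.1))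
  have hi2 : IntegrableOn f (Set.Icc (-b) (-a)) volume :=
    ContinuousOn.integrableOn_Icc
      (hcontOn _ fun k hk => ne_of_lt (lt_of_le_of_lt hk.2 (by linarith)))
  rw [Kker, ← hf_def, sset_eq_union n, ← ha_def, ← hb_def,
    setIntegral_union hdisj measurableSet_Icc hi1 hi2]
  have e1 : ∫ k in Set.Icc a b, f k = ∫ k in a..b, f k := by
    rw [integral_Icc_eq_integral_Ioc, intervalIntegral.integral_of_le hab]
  have e2 : ∫ k in Set.Icc (-b) (-a), f k = ∫ k in a..b, f (-k) := by
    rw [intervalIntegral.integral_comp_neg f, integral_Icc_eq_integral_Ioc,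
      intervalIntegral.integral_of_le (by linarith : -b ≤ -a)]
  rw [e1, e2, ← intervalIntegral.integral_add
    ((hcontOn _ huIcc).intervalIntegrable) (hcontOn2.intervalIntegrable)]
  have hEq : Set.EqOn (fun k => f k + f (-k))
      (fun k : ℝ => Complex.I * ((Real.sin (k * Δ) / k : ℝ) : ℂ)) (Set.uIcc a b) := by
    intro k hk
    have hk0 : (k:ℝ) ≠ 0 := huIcc k hk
    have hk0' : (k:ℂ) ≠ 0 := Complex.ofReal_ne_zero.2 hk0
    simp only [hf_def]
    have harg : Complex.I * ((-k : ℝ) : ℂ) * (Δ:ℂ) = -(Complex.I * ((k * Δ : ℝ):ℂ)) := by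
      push_cast; ring
    have harg2 : Complex.I * (k:ℂ) * (Δ:ℂ) = Complex.I * ((k * Δ : ℝ):ℂ) := by
      push_cast; ring
    rw [harg, harg2, Complex.ofReal_neg, eq_add_of_sub_eq (exp_sub_exp (k*Δ)),
      Complex.ofReal_div]
    field_simp
    ring
  rw [intervalIntegral.integral_congr hEq, intervalIntegral.integral_const_mul,
    intervalIntegral.integral_ofReal, J]

lemma abs_exp_neg_I (k t : ℝ) :
    ‖Complex.exp (-(Complex.I * k * t))‖ = 1 := by
  rw [show -(Complex.I * (k:ℂ) * (t:ℂ)) = ((-(k*t) : ℝ):ℂ) * Complex.I by push_cast; ring]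
  exact Complex.norm_exp_ofReal_mul_I _

lemma abs_exp_I (k t : ℝ) :
    ‖Complex.exp (Complex.I * k * t)‖ = 1 := by
  rw [show (Complex.I * (k:ℂ) * (t:ℂ)) = (((k*t) : ℝ):ℂ) * Complex.I by push_cast; ring]
  exact Complex.norm_exp_ofReal_mul_I _

lemma phase_meas (φ : ℝ → ℝ) (hφ : Measurable φ) (k : ℝ) :
    Measurable fun y : ℝ => Complex.exp (-(Complex.I * k * (φ y : ℝ))) :=
  Complex.measurable_exp.comp
    (((Complex.measurable_ofReal.comp hφ).const_mul (Complex.I * k)).neg)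

lemma ft_like_continuous (g : ℝ → ℂ) (hg : Integrable g) (φ : ℝ → ℝ) (hφ : Measurable φ) :
    Continuous fun k : ℝ => ∫ y : ℝ, g y * Complex.exp (-(Complex.I * k * (φ y : ℝ))) := by
  apply continuous_of_dominated (bound := fun y => ‖g y‖)
  · exact fun k => hg.1.mul (phase_meas φ hφ k).aestronglyMeasurable
  · intro k
    refine Filter.Eventually.of_forall fun y => ?_
    rw [norm_mul, abs_exp_neg_I, mul_one]
  · exact hg.norm
  · refine Filter.Eventually.of_forall fun y => ?_
    exact continuous_const.mul (Complex.continuous_exp.comp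
      (((continuous_const.mul Complex.continuous_ofReal).mul continuous_const)).neg)

lemma key_lemma (g₁ g₂ : ℝ → ℂ) (φ : ℝ → ℝ) (hφ : Measurable φ)
    (hg₁ : Integrable g₁) (hg₂ : Integrable g₂)
    (G₁ G₂ : ℝ → ℂ)
    (hG₁ : ∀ k : ℝ, G₁ k = ∫ y : ℝ, g₁ y * Complex.exp (-(Complex.I * k * (φ y : ℝ))))
    (hG₂ : ∀ k : ℝ, G₂ k = ∫ y : ℝ, g₂ y * Complex.exp (-(Complex.I * k * (φ y : ℝ))))
    {S : ℝ} (hS : Filter.Tendsto sif Filter.atTop (𝓝 S))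
    (hint : Integrable (fun k : ℝ => ‖G₁ k * G₂ k‖ / |k|)) :
    (∫ k : ℝ, (starRingEnd ℂ) (G₂ k) * G₁ k / (2 * (k : ℂ)))
      = ∫ p : ℝ × ℝ, (starRingEnd ℂ) (g₂ p.1) * g₁ p.2 *
          (Complex.I * ((S * Real.sign (φ p.1 - φ p.2) : ℝ) : ℂ)) := by
  have hG₁c : Continuous G₁ := by
    rw [show G₁ = _ from funext hG₁]; exact ft_like_continuous g₁ hg₁ φ hφ
  have hG₂c : Continuous G₂ := by
    rw [show G₂ = _ from funext hG₂]; exact ft_like_continuous g₂ hg₂ φ hφ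
  set H : ℝ → ℂ := fun k => (starRingEnd ℂ) (G₂ k) * G₁ k / (2 * (k:ℂ)) with hH
  -- integrability of H
  have hH_int : Integrable H := by
    refine Integrable.mono' hint ?_ ?_
    · have : H = fun k => (starRingEnd ℂ) (G₂ k) * G₁ k * (2 * (k:ℂ))⁻¹ := by
        funext k; simp only [hH]; rw [div_eq_mul_inv]
      rw [this]
      exact (((Complex.continuous_conj.comp hG₂c).mul hG₁c).aestronglyMeasurable).mul
        ((Complex.measurable_ofReal.const_mul 2).inv.aestronglyMeasurable)
    · refine Filter.Eventually.of_forall fun k => ?_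
      rcases eq_or_ne k 0 with rfl | hk
      · simp [hH]
      · have h2k : ‖(2 * (k:ℂ))‖ = 2 * |k| := by
          rw [norm_mul, Complex.norm_real, Real.norm_eq_abs]
          norm_num
        rw [hH]
        simp only [norm_div, norm_mul, RCLike.norm_conj, h2k]
        rw [div_le_div_iff₀ (by positivity) (abs_pos.2 hk)]
        have hG2 : (0:ℝ) ≤ ‖G₂ k‖ * ‖G₁ k‖ := by positivity
        nlinarith [abs_pos.2 hk, hG2]
  -- limit over truncation
  have hlim1 : Filter.Tendsto (fun n : ℕ => ∫ k in sset n, H k) Filter.atTop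
      (𝓝 (∫ k : ℝ, H k)) := by
    have h := tendsto_setIntegral_of_monotone sset_meas sset_mono
      (by rw [sset_union]; exact hH_int.integrableOn)
    rw [sset_union] at h
    have h0 : ∫ k in ({(0:ℝ)}ᶜ : Set ℝ), H k = ∫ k : ℝ, H k := by
      rw [← integral_add_compl (measurableSet_singleton (0:ℝ)) hH_int]
      have hz : ∫ k in ({(0:ℝ)} : Set ℝ), H k = 0 := by
        rw [Measure.restrict_eq_zero.mpr Real.volume_singleton]
        exact integral_zero_measure _
      rw [hz, zero_add]
    rwa [h0] at h
  -- truncated integral as double integral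
  have hkey : ∀ n : ℕ, ∫ k in sset n, H k
      = ∫ p : ℝ × ℝ, ((starRingEnd ℂ) (g₂ p.1) * g₁ p.2) *
          (Complex.I * ((J n (φ p.1 - φ p.2) : ℝ) : ℂ)) := by
    intro n
    have hpt : Set.EqOn H (fun k : ℝ => ∫ p : ℝ × ℝ,
        ((starRingEnd ℂ) (g₂ p.1) * g₁ p.2) *
          (Complex.exp (Complex.I * k * ((φ p.1 - φ p.2 : ℝ) : ℂ)) / (2 * (k:ℂ))))
        (sset n) := by
      intro k hk
      have hconj : (starRingEnd ℂ) (G₂ k)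
          = ∫ z : ℝ, (starRingEnd ℂ) (g₂ z) * Complex.exp (Complex.I * k * (φ z : ℝ)) := by
        rw [hG₂ k, ← integral_conj]
        congr 1; funext z
        rw [map_mul]
        congr 1
        rw [← Complex.exp_conj]
        congr 1
        simp only [map_neg, map_mul, Complex.conj_I, Complex.conj_ofReal]
        ring
      show H k = _
      simp only [hH]
      rw [hconj, hG₁ k, ← integral_prod_mul, ← Measure.volume_eq_prod ℝ ℝ, ← MeasureTheory.integral_div]
      congr 1; funext p
      rw [Complex.ofReal_sub,
        show Complex.I * (k:ℂ) * ((φ p.1 : ℂ) - (φ p.2 : ℂ))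
            = Complex.I * (k:ℂ) * (φ p.1 : ℂ) + -(Complex.I * (k:ℂ) * (φ p.2 : ℂ)) by ring,
        Complex.exp_add]
      ring
    rw [setIntegral_congr_fun (sset_meas n) hpt]
    -- integrability on the product for Fubini
    haveI : IsFiniteMeasure (volume.restrict (sset n)) :=
      ⟨by rw [Measure.restrict_apply_univ]; exact sset_vol_lt_top n⟩
    have qmp21 : Measure.QuasiMeasurePreserving (fun w : ℝ × (ℝ × ℝ) => w.2.1)
        ((volume.restrict (sset n)).prod (((volume : Measure ℝ)).prod (volume : Measure ℝ)))
        volume :=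
      Measure.quasiMeasurePreserving_fst.comp Measure.quasiMeasurePreserving_snd
    have qmp22 : Measure.QuasiMeasurePreserving (fun w : ℝ × (ℝ × ℝ) => w.2.2)
        ((volume.restrict (sset n)).prod (((volume : Measure ℝ)).prod (volume : Measure ℝ)))
        volume :=
      Measure.quasiMeasurePreserving_snd.comp Measure.quasiMeasurePreserving_snd
    have a2 : AEStronglyMeasurable (fun w : ℝ × (ℝ × ℝ) => g₂ w.2.1)
        ((volume.restrict (sset n)).prod (((volume : Measure ℝ)).prod (volume : Measure ℝ))) :=
      hg₂.1.comp_quasiMeasurePreserving qmp21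
    have a1 : AEStronglyMeasurable (fun w : ℝ × (ℝ × ℝ) => g₁ w.2.2)
        ((volume.restrict (sset n)).prod (((volume : Measure ℝ)).prod (volume : Measure ℝ))) :=
      hg₁.1.comp_quasiMeasurePreserving qmp22
    have m3 : Measurable fun w : ℝ × (ℝ × ℝ) =>
        Complex.exp (Complex.I * w.1 * ((φ w.2.1 - φ w.2.2 : ℝ) : ℂ)) / (2 * (w.1 : ℂ)) := by
      apply Measurable.div
      · apply Complex.measurable_exp.comp
        exact ((Complex.measurable_ofReal.comp measurable_fst).const_mul Complex.I).mul
          (Complex.measurable_ofReal.comp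
            ((hφ.comp (measurable_fst.comp measurable_snd)).sub
              (hφ.comp (measurable_snd.comp measurable_snd))))
      · exact (Complex.measurable_ofReal.comp measurable_fst).const_mul 2
    have hae1 : ∀ᵐ w ∂((volume.restrict (sset n)).prod
        (((volume : Measure ℝ)).prod (volume : Measure ℝ))), w.1 ∈ sset n := by
      rw [ae_iff]
      have hset : {w : ℝ × (ℝ × ℝ) | ¬ w.1 ∈ sset n} = (sset n)ᶜ ×ˢ (Set.univ : Set (ℝ × ℝ)) := by
        ext w; simp [Set.mem_prod]
      rw [hset, Measure.prod_prod, Measure.restrict_apply (sset_meas n).compl]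
      simp
    have hInt : Integrable (Function.uncurry fun (k : ℝ) (p : ℝ × ℝ) =>
        ((starRingEnd ℂ) (g₂ p.1) * g₁ p.2) *
          (Complex.exp (Complex.I * k * ((φ p.1 - φ p.2 : ℝ) : ℂ)) / (2 * (k:ℂ))))
        ((volume.restrict (sset n)).prod (((volume : Measure ℝ)).prod (volume : Measure ℝ))) := by
      refine Integrable.mono'
        (g := fun w : ℝ × (ℝ × ℝ) => ((n:ℝ)+1) * (‖g₂ w.2.1‖ * ‖g₁ w.2.2‖)) ?_ ?_ ?_
      · exact (integrable_const ((n:ℝ)+1)).mul_prod (hg₂.norm.mul_prod hg₁.norm)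
      · exact ((Complex.continuous_conj.comp_aestronglyMeasurable a2).mul a1).mul
          m3.aestronglyMeasurable
      · filter_upwards [hae1] with w hw
        have hk0 : (0:ℝ) < |w.1| := lt_of_lt_of_le (Ja_pos n) hw.1
        have habsk : ‖(2 * (w.1:ℂ))‖ = 2 * |w.1| := by
          rw [norm_mul, Complex.norm_real, Real.norm_eq_abs]; norm_num
        rw [Function.uncurry]
        simp only [norm_mul, norm_div, RCLike.norm_conj, habsk,
          abs_exp_I]
        have hb : (1:ℝ) / (2 * |w.1|) ≤ ((n:ℝ)+1) := by
          rw [div_le_iff₀ (by positivity)]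
          have h1 : 1/((n:ℝ)+1) ≤ |w.1| := hw.1
          rw [div_le_iff₀ (by positivity)] at h1
          nlinarith [abs_nonneg w.1]
        have hnn : (0:ℝ) ≤ ‖g₂ w.2.1‖ * ‖g₁ w.2.2‖ := by positivity
        calc ‖g₂ w.2.1‖ * ‖g₁ w.2.2‖ * (1 / (2 * |w.1|))
            ≤ ‖g₂ w.2.1‖ * ‖g₁ w.2.2‖ * ((n:ℝ)+1) := by
              exact mul_le_mul_of_nonneg_left hb hnn
          _ = ((n:ℝ)+1) * (‖g₂ w.2.1‖ * ‖g₁ w.2.2‖) := by ring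
    have hswap := integral_integral_swap
      (μ := volume.restrict (sset n)) (ν := ((volume : Measure ℝ)).prod (volume : Measure ℝ))
      (f := fun (k : ℝ) (p : ℝ × ℝ) =>
        ((starRingEnd ℂ) (g₂ p.1) * g₁ p.2) *
          (Complex.exp (Complex.I * k * ((φ p.1 - φ p.2 : ℝ) : ℂ)) / (2 * (k:ℂ)))) hInt
    rw [Measure.volume_eq_prod ℝ ℝ]
    rw [hswap]
    congr 1; funext p
    rw [MeasureTheory.integral_const_mul]
    congr 1
    exact Kker_eq n (φ p.1 - φ p.2)
  -- dominated convergence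
  have hlim2 : Filter.Tendsto (fun n : ℕ => ∫ p : ℝ × ℝ,
      ((starRingEnd ℂ) (g₂ p.1) * g₁ p.2) * (Complex.I * ((J n (φ p.1 - φ p.2) : ℝ) : ℂ)))
      Filter.atTop
      (𝓝 (∫ p : ℝ × ℝ, (starRingEnd ℂ) (g₂ p.1) * g₁ p.2 *
        (Complex.I * ((S * Real.sign (φ p.1 - φ p.2) : ℝ) : ℂ)))) := by
    have b2 : AEStronglyMeasurable (fun p : ℝ × ℝ => g₂ p.1) volume :=
      hg₂.1.comp_quasiMeasurePreserving
        (by rw [Measure.volume_eq_prod ℝ ℝ]; exact Measure.quasiMeasurePreserving_fst)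
    have b1 : AEStronglyMeasurable (fun p : ℝ × ℝ => g₁ p.2) volume :=
      hg₁.1.comp_quasiMeasurePreserving
        (by rw [Measure.volume_eq_prod ℝ ℝ]; exact Measure.quasiMeasurePreserving_snd)
    have hΔm : Measurable fun p : ℝ × ℝ => φ p.1 - φ p.2 :=
      (hφ.comp measurable_fst).sub (hφ.comp measurable_snd)
    apply tendsto_integral_of_dominated_convergence
      (bound := fun p : ℝ × ℝ => 8 * (‖g₂ p.1‖ * ‖g₁ p.2‖))
    · intro n
      exact ((Complex.continuous_conj.comp_aestronglyMeasurable b2).mul b1).mul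
        ((((Complex.measurable_ofReal.comp ((J_cont n).measurable.comp hΔm)).const_mul
          Complex.I)).aestronglyMeasurable)
    · have : Integrable (fun p : ℝ × ℝ => ‖g₂ p.1‖ * ‖g₁ p.2‖) volume := by
        rw [Measure.volume_eq_prod ℝ ℝ]; exact hg₂.norm.mul_prod hg₁.norm
      exact this.const_mul 8
    · intro n
      refine Filter.Eventually.of_forall fun p => ?_
      rw [norm_mul, norm_mul, RCLike.norm_conj, norm_mul, Complex.norm_I, one_mul,
        Complex.norm_real, Real.norm_eq_abs]
      calc ‖g₂ p.1‖ * ‖g₁ p.2‖ * |J n (φ p.1 - φ p.2)|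
          ≤ ‖g₂ p.1‖ * ‖g₁ p.2‖ * 8 :=
            mul_le_mul_of_nonneg_left (J_bound n _) (by positivity)
        _ = 8 * (‖g₂ p.1‖ * ‖g₁ p.2‖) := by ring
    · refine Filter.Eventually.of_forall fun p => ?_
      have hJ := J_tendsto hS (φ p.1 - φ p.2)
      have hJc : Filter.Tendsto (fun n : ℕ => ((J n (φ p.1 - φ p.2) : ℝ) : ℂ)) Filter.atTop
          (𝓝 ((S * Real.sign (φ p.1 - φ p.2) : ℝ) : ℂ)) :=
        (Complex.continuous_ofReal.tendsto _).comp hJ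
      exact ((hJc.const_mul Complex.I).const_mul _)
  have hlim1' : Filter.Tendsto (fun n : ℕ => ∫ p : ℝ × ℝ,
      ((starRingEnd ℂ) (g₂ p.1) * g₁ p.2) * (Complex.I * ((J n (φ p.1 - φ p.2) : ℝ) : ℂ)))
      Filter.atTop (𝓝 (∫ k : ℝ, H k)) := by
    rw [show (fun n : ℕ => ∫ p : ℝ × ℝ,
        ((starRingEnd ℂ) (g₂ p.1) * g₁ p.2) * (Complex.I * ((J n (φ p.1 - φ p.2) : ℝ) : ℂ)))
      = fun n : ℕ => ∫ k in sset n, H k from funext fun n => (hkey n).symm]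
    exact hlim1
  exact tendsto_nhds_unique hlim1' hlim2

theorem stmt4
    (I : Set ℝ) (hIopen : IsOpen I) (hIconn : I.OrdConnected)
    (x x' : ℝ → ℝ)
    (hderiv : ∀ y : ℝ, HasDerivAt x (x' y) y)
    (hx'cont : Continuous x')
    (hx'pos : ∀ y : ℝ, 0 < x' y)
    (hmono : StrictMono x)
    (hbij : Set.BijOn x Set.univ I)
    (f₁ f₂ fc₁ fc₂ : ℝ → ℂ)
    (hf₁ : Integrable f₁) (hf₂ : Integrable f₂)
    (hfreq₁ : ft f₁ 0 = 0) (hfreq₂ : ft f₂ 0 = 0)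
    (hfc₁ : ∀ y : ℝ, fc₁ (x y) = f₁ y / ((x' y : ℝ) : ℂ))
    (hfc₂ : ∀ y : ℝ, fc₂ (x y) = f₂ y / ((x' y : ℝ) : ℂ))
    (hfc₁0 : ∀ u : ℝ, u ∉ I → fc₁ u = 0)
    (hfc₂0 : ∀ u : ℝ, u ∉ I → fc₂ u = 0)
    (hfc₁int : Integrable fc₁) (hfc₂int : Integrable fc₂)
    (hA : Integrable (fun k : ℝ => ‖ft fc₁ k * ft fc₂ k‖ / |k|))
    (hB : Integrable (fun p : ℝ => ‖ft f₁ p * ft f₂ p‖ / |p|)) :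
    ∫ k : ℝ, (starRingEnd ℂ) (ft fc₂ k) * ft fc₁ k / (2 * (k : ℂ))
      = ∫ p : ℝ, (starRingEnd ℂ) (ft f₂ p) * ft f₁ p / (2 * (p : ℂ)) := by
  obtain ⟨S, hS⟩ := sif_exists
  set Cc : ℂ := 1 / (Real.sqrt (2 * Real.pi) : ℂ) with hCc_def
  set r : ℝ := Real.sqrt (2 * Real.pi) with hr_def
  have hr : 0 < r := Real.sqrt_pos.2 (by positivity)
  have hCc_abs : ‖Cc‖ = r⁻¹ := by
    rw [hCc_def, norm_div, norm_one, Complex.norm_real, Real.norm_eq_abs, abs_of_pos hr, one_div]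
  have hCc_conj : (starRingEnd ℂ) Cc = Cc := by
    rw [hCc_def, map_div₀, map_one, Complex.conj_ofReal]
  have hxc : Continuous x := continuous_iff_continuousAt.2 fun y => (hderiv y).continuousAt
  -- change of variables
  have hchange : ∀ (g gc : ℝ → ℂ), (∀ y, gc (x y) = g y / ((x' y : ℝ) : ℂ)) →
      (∀ u ∉ I, gc u = 0) → ∀ k : ℝ,
      (∫ t : ℝ, gc t * Complex.exp (-(Complex.I * k * t)))
        = ∫ y : ℝ, g y * Complex.exp (-(Complex.I * k * ((x y : ℝ) : ℂ))) := by
    intro g gc hgc hgc0 k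
    rw [← setIntegral_eq_integral_of_forall_compl_eq_zero
      (s := I) (f := fun t : ℝ => gc t * Complex.exp (-(Complex.I * k * t)))
      (fun u hu => by show gc u * _ = 0; rw [hgc0 u hu, zero_mul])]
    rw [← hbij.image_eq,
      integral_image_eq_integral_abs_deriv_smul MeasurableSet.univ
        (fun y _ => (hderiv y).hasDerivWithinAt) hbij.injOn]
    rw [setIntegral_univ]
    congr 1; funext y
    have hne : ((x' y : ℝ) : ℂ) ≠ 0 := Complex.ofReal_ne_zero.2 (ne_of_gt (hx'pos y))
    rw [abs_of_pos (hx'pos y), hgc y, Complex.real_smul]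
    field_simp
  -- the four plain transforms
  set G₁ : ℝ → ℂ := fun k => ∫ y : ℝ, f₁ y * Complex.exp (-(Complex.I * k * ((x y : ℝ) : ℂ)))
    with hG₁_def
  set G₂ : ℝ → ℂ := fun k => ∫ y : ℝ, f₂ y * Complex.exp (-(Complex.I * k * ((x y : ℝ) : ℂ)))
    with hG₂_def
  set E₁ : ℝ → ℂ := fun k => ∫ y : ℝ, f₁ y * Complex.exp (-(Complex.I * k * (y : ℂ)))
    with hE₁_def
  set E₂ : ℝ → ℂ := fun k => ∫ y : ℝ, f₂ y * Complex.exp (-(Complex.I * k * (y : ℂ)))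
    with hE₂_def
  have hft1 : ∀ k : ℝ, ft fc₁ k = Cc * G₁ k := by
    intro k
    rw [hG₁_def]
    show Cc * (∫ t : ℝ, fc₁ t * Complex.exp (-(Complex.I * k * t))) = _
    rw [hchange f₁ fc₁ hfc₁ hfc₁0 k]
  have hft2 : ∀ k : ℝ, ft fc₂ k = Cc * G₂ k := by
    intro k
    rw [hG₂_def]
    show Cc * (∫ t : ℝ, fc₂ t * Complex.exp (-(Complex.I * k * t))) = _
    rw [hchange f₂ fc₂ hfc₂ hfc₂0 k]
  have hfte1 : ∀ k : ℝ, ft f₁ k = Cc * E₁ k := fun k => rfl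
  have hfte2 : ∀ k : ℝ, ft f₂ k = Cc * E₂ k := fun k => rfl
  -- integrability hypotheses for key_lemma
  have hintx : Integrable (fun k : ℝ => ‖G₁ k * G₂ k‖ / |k|) := by
    have he : (fun k : ℝ => ‖G₁ k * G₂ k‖ / |k|)
        = fun k : ℝ => (r^2) * (‖ft fc₁ k * ft fc₂ k‖ / |k|) := by
      funext k
      rw [hft1 k, hft2 k, norm_mul, norm_mul, norm_mul, norm_mul, hCc_abs]
      rw [← mul_div_assoc]
      congr 1
      field_simp
    rw [he]
    exact hA.const_mul _
  have hinti : Integrable (fun k : ℝ => ‖E₁ k * E₂ k‖ / |k|) := by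
    have he : (fun k : ℝ => ‖E₁ k * E₂ k‖ / |k|)
        = fun k : ℝ => (r^2) * (‖ft f₁ k * ft f₂ k‖ / |k|) := by
      funext k
      rw [hfte1 k, hfte2 k, norm_mul, norm_mul, norm_mul, norm_mul, hCc_abs]
      rw [← mul_div_assoc]
      congr 1
      field_simp
    rw [he]
    exact hB.const_mul _
  -- apply the key lemma twice
  have keyx := key_lemma f₁ f₂ x hxc.measurable hf₁ hf₂ G₁ G₂
    (fun k => rfl) (fun k => rfl) hS hintx
  have keyi := key_lemma f₁ f₂ (fun y => y) measurable_id hf₁ hf₂ E₁ E₂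
    (fun k => rfl) (fun k => rfl) hS hinti
  -- rewrite both sides
  have hL : (fun k : ℝ => (starRingEnd ℂ) (ft fc₂ k) * ft fc₁ k / (2 * (k : ℂ)))
      = fun k : ℝ => Cc^2 * ((starRingEnd ℂ) (G₂ k) * G₁ k / (2 * (k:ℂ))) := by
    funext k
    rw [hft1 k, hft2 k, map_mul, hCc_conj]
    ring
  have hR : (fun k : ℝ => (starRingEnd ℂ) (ft f₂ k) * ft f₁ k / (2 * (k : ℂ)))
      = fun k : ℝ => Cc^2 * ((starRingEnd ℂ) (E₂ k) * E₁ k / (2 * (k:ℂ))) := by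
    funext k
    rw [hfte1 k, hfte2 k, map_mul, hCc_conj]
    ring
  rw [hL, hR, MeasureTheory.integral_const_mul, MeasureTheory.integral_const_mul, keyx, keyi]
  congr 1
  congr 1
  funext p
  have hsign : Real.sign (x p.1 - x p.2) = Real.sign (p.1 - p.2) := by
    rcases lt_trichotomy p.1 p.2 with h | h | h
    · rw [Real.sign_of_neg (sub_neg.2 (hmono h)), Real.sign_of_neg (sub_neg.2 h)]
    · rw [h]; simp
    · rw [Real.sign_of_pos (sub_pos.2 (hmono h)), Real.sign_of_pos (sub_pos.2 h)]
  rw [hsign]
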